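/- Let G : ℝ → ℝ be a continuous monotone non-decreasing function with values in [0,1] satisfying G(x) = 1 - G(-x) for all x. Then ∫_{-1}^{1} G(x) · (arctan x)/x dx = G_Catalan, where G_Catalan is Catalan's constant. -/

import Mathlib

open Real Filter Finset intervalIntegral MeasureTheory
open scoped Topology

lemma abs_arctan_le (x : ℝ) : |Real.arctan x| ≤ |x| := by
  have := Convex.norm_image_sub_le_of_norm_deriv_le
    (f := Real.arctan) (s := Set.univ) (C := 1)
    (fun y _ => (Real.hasDerivAt_arctan y).differentiableAt)
    (fun y _ => by
      rw [(Real.hasDerivAt_arctan y).deriv, Real.norm_eq_abs,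
        abs_of_pos (by positivity), div_le_one (by positivity)]
      nlinarith [sq_nonneg y])
    convex_univ (Set.mem_univ 0) (Set.mem_univ x)
  simpa using this

lemma arctan_div_intervalIntegrable (a b : ℝ) :
    IntervalIntegrable (fun x => Real.arctan x / x) volume a b := by
  rw [intervalIntegrable_iff]
  apply MeasureTheory.Measure.integrableOn_of_bounded (M := 1) measure_Ioc_lt_top.ne
    (Real.measurable_arctan.div measurable_id).aestronglyMeasurable
  filter_upwards with x
  rcases eq_or_ne x 0 with rfl | hx
  · simp
  · simp only [Pi.div_apply, id]
    rw [Real.norm_eq_abs, abs_div, div_le_one (abs_pos.mpr hx)]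
    simpa using abs_arctan_le x


lemma alt_tail {f : ℕ → ℝ} (hf : Antitone f) (h0 : ∀ n, 0 ≤ f n) {l : ℝ}
    (hl : Tendsto (fun n => ∑ i ∈ Finset.range n, (-1:ℝ)^i * f i) atTop (𝓝 l)) (n : ℕ) :
    |l - ∑ i ∈ Finset.range n, (-1:ℝ)^i * f i| ≤ f n := by
  rcases Nat.even_or_odd n with ⟨k, hk⟩ | ⟨k, hk⟩
  · have h1 := hf.alternating_series_le_tendsto hl k
    have h2 := hf.tendsto_le_alternating_series hl k
    rw [Finset.sum_range_succ] at h2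
    have hpow : (-1:ℝ)^(2*k) = 1 := by simp [pow_mul]
    rw [hpow, one_mul] at h2
    subst hk
    rw [show k + k = 2*k by ring]
    rw [abs_le]
    constructor <;> [nlinarith [h0 (2*k)]; nlinarith]
  · have h2 := hf.tendsto_le_alternating_series hl k
    have h1 := hf.alternating_series_le_tendsto hl (k+1)
    rw [show 2*(k+1) = (2*k+1)+1 by ring, Finset.sum_range_succ] at h1
    have hpow : (-1:ℝ)^(2*k+1) = -1 := by simp [pow_succ, pow_mul]
    rw [hpow, neg_one_mul] at h1
    subst hk
    rw [show 2*k + 1 = 2*k+1 by ring]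
    rw [abs_le]
    constructor <;> [nlinarith; nlinarith [h0 (2*k+1)]]

lemma term_integral (n : ℕ) :
    ∫ x in (0:ℝ)..1, (-1:ℝ)^n * (x^(2*n) / (2*n+1)) = (-1:ℝ)^n / (2*n+1)^2 := by
  have : (fun x:ℝ => (-1:ℝ)^n * (x^(2*n) / (2*(n:ℝ)+1)))
      = fun x:ℝ => ((-1:ℝ)^n / (2*(n:ℝ)+1)) * x^(2*n) := by funext x; ring
  rw [this, intervalIntegral.integral_const_mul, integral_pow]
  have h : (0:ℝ) < 2*(n:ℝ)+1 := by positivity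
  rw [zero_pow (by omega), one_pow]
  push_cast
  field_simp
  ring


lemma partial_tendsto {x : ℝ} (hx0 : 0 < x) (hx1 : x ≤ 1) :
    Tendsto (fun N => ∑ i ∈ Finset.range N, (-1:ℝ)^i * (x^(2*i) / (2*(i:ℝ)+1))) atTop
      (𝓝 (Real.arctan x / x)) := by
  rcases eq_or_lt_of_le hx1 with rfl | hlt
  · have := Real.tendsto_sum_pi_div_four
    rw [show Real.arctan 1 / 1 = π/4 by rw [Real.arctan_one]; ring]
    refine this.congr fun N => Finset.sum_congr rfl fun i _ => ?_
    simp [div_eq_mul_inv]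
  · have hs : HasSum (fun n : ℕ => (-1:ℝ)^n * x^(2*n+1) / (2*(n:ℝ)+1)) (Real.arctan x) := by
      have := Real.hasSum_arctan (x := x) (by rw [Real.norm_eq_abs, abs_of_pos hx0]; exact hlt)
      convert this using 2 with n
      push_cast; ring
    have hs2 := hs.div_const x
    have heq : ∀ n : ℕ, ((-1:ℝ)^n * x^(2*n+1) / (2*(n:ℝ)+1)) / x
        = (-1:ℝ)^n * (x^(2*n) / (2*(n:ℝ)+1)) := by
      intro n
      rw [pow_succ]
      field_simp
    simp_rw [heq] at hs2
    exact hs2.tendsto_sum_nat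

lemma integral_arctan_div :
    ∫ x in (0:ℝ)..1, Real.arctan x / x = ∑' n : ℕ, (-1:ℝ)^n / (2*(n:ℝ)+1)^2 := by
  have hsum : Summable (fun n : ℕ => (-1:ℝ)^n / (2*(n:ℝ)+1)^2) := by
    apply Summable.of_abs
    have hbase : Summable (fun n : ℕ => 1 / ((n:ℝ)+1)^2) := by
      have h2 : Summable (fun n : ℕ => 1 / ((n:ℝ))^2) := by
        simpa using Real.summable_one_div_nat_pow.mpr one_lt_two
      have := (summable_nat_add_iff 1).mpr h2
      exact this.congr fun n => by push_cast; ring_nf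
    apply Summable.of_nonneg_of_le (fun n => abs_nonneg _) (fun n => ?_) hbase
    have hn : (0:ℝ) ≤ (n:ℝ) := Nat.cast_nonneg n
    calc |(-1:ℝ)^n / (2*(n:ℝ)+1)^2| = 1/(2*(n:ℝ)+1)^2 := by
          rw [abs_div, abs_pow, abs_neg, abs_one, one_pow, abs_of_pos (by positivity)]
      _ ≤ 1/((n:ℝ)+1)^2 := by
          apply one_div_le_one_div_of_le (by positivity)
          nlinarith
  have hS := hsum.hasSum.tendsto_sum_nat
  have hfi := arctan_div_intervalIntegrable 0 1
  have key : ∀ N : ℕ, |(∫ x in (0:ℝ)..1, Real.arctan x / x)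
      - ∑ n ∈ Finset.range N, (-1:ℝ)^n / (2*(n:ℝ)+1)^2| ≤ 1/(2*(N:ℝ)+1) := by
    intro N
    have hpi : IntervalIntegrable
        (fun x => ∑ n ∈ Finset.range N, (-1:ℝ)^n * (x^(2*n) / (2*(n:ℝ)+1))) volume 0 1 := by
      apply Continuous.intervalIntegrable
      continuity
    have hps : ∑ n ∈ Finset.range N, (-1:ℝ)^n / (2*(n:ℝ)+1)^2
        = ∫ x in (0:ℝ)..1, ∑ n ∈ Finset.range N, (-1:ℝ)^n * (x^(2*n) / (2*(n:ℝ)+1)) := by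
      rw [intervalIntegral.integral_finset_sum]
      · exact (Finset.sum_congr rfl fun n _ => (term_integral n).symm)
      · intro n _
        apply Continuous.intervalIntegrable; continuity
    rw [hps, ← intervalIntegral.integral_sub hfi hpi]
    have hb := intervalIntegral.norm_integral_le_of_norm_le_const (a := (0:ℝ)) (b := 1)
      (C := 1/(2*(N:ℝ)+1))
      (f := fun x => Real.arctan x / x
        - ∑ n ∈ Finset.range N, (-1:ℝ)^n * (x^(2*n)/(2*(n:ℝ)+1))) ?_
    · simpa using hb
    · intro x hx
      rw [Set.uIoc_of_le zero_le_one] at hx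
      obtain ⟨hx0, hx1⟩ := hx
      have hanti : Antitone (fun n : ℕ => x^(2*n) / (2*(n:ℝ)+1)) := by
        apply antitone_nat_of_succ_le
        intro n
        apply div_le_div₀ (by positivity) ?_ (by positivity) ?_
        · exact pow_le_pow_of_le_one hx0.le hx1 (by omega)
        · push_cast; linarith
      have h0 : ∀ n : ℕ, 0 ≤ x^(2*n) / (2*(n:ℝ)+1) := fun n => by positivity
      have halt := alt_tail hanti h0 (partial_tendsto hx0 hx1) N
      rw [Real.norm_eq_abs]
      refine halt.trans ?_
      gcongr
      exact pow_le_one₀ hx0.le hx1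
  have hz : Tendsto (fun N : ℕ => 1/(2*(N:ℝ)+1)) atTop (𝓝 0) := by
    simp_rw [one_div]
    apply Filter.Tendsto.inv_tendsto_atTop
    exact tendsto_atTop_add_const_right _ 1
      (tendsto_natCast_atTop_atTop.const_mul_atTop zero_lt_two)
  have ht : Tendsto (fun N : ℕ => ∑ n ∈ Finset.range N, (-1:ℝ)^n / (2*(n:ℝ)+1)^2) atTop
      (𝓝 (∫ x in (0:ℝ)..1, Real.arctan x / x)) := by
    rw [tendsto_iff_dist_tendsto_zero]
    apply squeeze_zero (fun _ => dist_nonneg) (fun N => ?_) hz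
    rw [Real.dist_eq, abs_sub_comm]
    exact key N
  exact tendsto_nhds_unique ht hS


theorem catalan_single_integral (G : ℝ → ℝ)
    (hc : Continuous G) (hm : Monotone G)
    (hr : ∀ x, G x ∈ Set.Icc (0:ℝ) 1)
    (hs : ∀ x, G x = 1 - G (-x)) :
    ∫ x in (-1:ℝ)..1, G x * (Real.arctan x / x)
      = ∑' n : ℕ, (-1 : ℝ)^n / (2 * n + 1)^2 := by
  have hGfi : ∀ a b : ℝ, IntervalIntegrable (fun x => G x * (Real.arctan x / x)) volume a b := by
    intro a b
    rw [intervalIntegrable_iff]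
    apply MeasureTheory.Measure.integrableOn_of_bounded (M := 1) measure_Ioc_lt_top.ne
      ((hc.measurable.mul (Real.measurable_arctan.div measurable_id)).aestronglyMeasurable)
    filter_upwards with x
    simp only [Pi.mul_apply, Pi.div_apply, id]
    rw [Real.norm_eq_abs, abs_mul]
    have h1 : |G x| ≤ 1 := by
      obtain ⟨ha, hb⟩ := hr x; rw [abs_le]; constructor <;> linarith
    have h2 : |Real.arctan x / x| ≤ 1 := by
      rcases eq_or_ne x 0 with rfl | hx
      · simp
      · rw [abs_div, div_le_one (abs_pos.mpr hx)]; exact abs_arctan_le x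
    calc |G x| * |Real.arctan x / x| ≤ 1 * 1 :=
          mul_le_mul h1 h2 (abs_nonneg _) zero_le_one
      _ = 1 := mul_one 1
  have hG : ∀ x, G (-x) = 1 - G x := fun x => by
    have := hs (-x); rw [neg_neg] at this; linarith
  have heven : ∀ x : ℝ, Real.arctan (-x) / (-x) = Real.arctan x / x := fun x => by
    rw [Real.arctan_neg, neg_div_neg_eq]
  have h1 : ∫ x in (-1:ℝ)..1, G x * (Real.arctan x / x)
      = ∫ x in (-1:ℝ)..1, (1 - G x) * (Real.arctan x / x) := by
    have hcomp := intervalIntegral.integral_comp_neg (a := (-1:ℝ)) (b := 1)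
      (f := fun y => G y * (Real.arctan y / y))
    rw [neg_neg] at hcomp
    rw [← hcomp]
    congr 1; funext x
    rw [hG, heven]
  have h2 : ∫ x in (-1:ℝ)..1, (1 - G x) * (Real.arctan x / x)
      = (∫ x in (-1:ℝ)..1, Real.arctan x / x)
        - ∫ x in (-1:ℝ)..1, G x * (Real.arctan x / x) := by
    rw [← intervalIntegral.integral_sub (arctan_div_intervalIntegrable _ _) (hGfi _ _)]
    congr 1; funext x; ring
  have h3 : ∫ x in (-1:ℝ)..1, Real.arctan x / x
      = 2 * ∫ x in (0:ℝ)..1, Real.arctan x / x := by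
    have hsplit := intervalIntegral.integral_add_adjacent_intervals
      (arctan_div_intervalIntegrable (-1) 0) (arctan_div_intervalIntegrable 0 1)
    have hneg : ∫ x in (-1:ℝ)..0, Real.arctan x / x = ∫ x in (0:ℝ)..1, Real.arctan x / x := by
      have hcomp := intervalIntegral.integral_comp_neg (a := (0:ℝ)) (b := 1)
        (f := fun y => Real.arctan y / y)
      rw [neg_zero] at hcomp
      rw [← hcomp]
      congr 1; funext x; rw [heven]
    linarith
  have hI : ∫ x in (-1:ℝ)..1, G x * (Real.arctan x / x)
      = ∫ x in (0:ℝ)..1, Real.arctan x / x := by linarith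
  rw [hI, integral_arctan_div]
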